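/- A pure quaternion c belongs to the spherical Mandelbrot set if and only if ‖Q_c^(n)(0)‖ ≤ 2 for all n ∈ ℕ. -/

import Mathlib

open scoped Quaternion
open Bornology

noncomputable def sCoord (ρ θ φ : ℝ) : ℍ[ℝ] :=
  ⟨0, ρ * (Real.sin φ * Real.cos θ), ρ * (Real.sin φ * Real.sin θ), ρ * Real.cos φ⟩

noncomputable def sphRho (q : ℍ[ℝ]) : ℝ := ‖q‖

noncomputable def sphTheta (q : ℍ[ℝ]) : ℝ :=
  if q.imI = 0 ∧ q.imJ = 0 then 0
  else if Complex.arg ⟨q.imI, q.imJ⟩ < 0 then Complex.arg ⟨q.imI, q.imJ⟩ + 2 * Real.pi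
  else Complex.arg ⟨q.imI, q.imJ⟩

open Classical in
noncomputable def sphPhi (q : ℍ[ℝ]) : ℝ :=
  if q = 0 then 0 else Real.arccos (q.imK / ‖q‖)

noncomputable def sprod (q₁ q₂ : ℍ[ℝ]) : ℍ[ℝ] :=
  sCoord (sphRho q₁ * sphRho q₂) (sphTheta q₁ + sphTheta q₂) (sphPhi q₁ + sphPhi q₂)

noncomputable def spow (n : ℕ) (q : ℍ[ℝ]) : ℍ[ℝ] :=
  sCoord (sphRho q ^ n) (n * sphTheta q) (n * sphPhi q)

lemma norm_sCoord (ρ θ φ : ℝ) : ‖sCoord ρ θ φ‖ = |ρ| := by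
  rw [norm_eq_sqrt_real_inner, Quaternion.inner_self, Quaternion.normSq_def']
  have h1 := Real.sin_sq_add_cos_sq θ
  have h2 := Real.sin_sq_add_cos_sq φ
  have : (sCoord ρ θ φ).1 ^ 2 + (sCoord ρ θ φ).2 ^ 2 + (sCoord ρ θ φ).3 ^ 2
      + (sCoord ρ θ φ).4 ^ 2 = ρ ^ 2 := by
    simp only [sCoord]
    linear_combination (ρ ^ 2 * Real.sin φ ^ 2) * h1 + ρ ^ 2 * h2
  rw [this, Real.sqrt_sq_eq_abs]

lemma norm_spow2 (q : ℍ[ℝ]) : ‖spow 2 q‖ = ‖q‖ ^ 2 := by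
  rw [spow, norm_sCoord, sphRho, abs_of_nonneg (by positivity)]

lemma spow2_zero : spow 2 (0 : ℍ[ℝ]) = 0 := by
  have : sphRho (0 : ℍ[ℝ]) = 0 := by simp [sphRho]
  simp only [spow, this, sCoord]
  ext <;> simp

/-- Membership in the spherical Mandelbrot set is equivalent to all iterates
being bounded by 2 in norm. -/
theorem spherical_mandelbrot_iff (c : ℍ[ℝ]) (hc : c.re = 0) :
    Bornology.IsBounded
        (Set.range fun n : ℕ => (fun q : ℍ[ℝ] => spow 2 q + c)^[n] 0) ↔
      ∀ n : ℕ, ‖(fun q : ℍ[ℝ] => spow 2 q + c)^[n] 0‖ ≤ 2 := by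
  set f := fun q : ℍ[ℝ] => spow 2 q + c with hf
  set z := fun n : ℕ => f^[n] 0 with hz
  have hstep : ∀ n, z (n + 1) = spow 2 (z n) + c := by
    intro n
    simp only [hz, Function.iterate_succ_apply']
    rfl
  have hlow : ∀ n, ‖z n‖ ^ 2 - ‖c‖ ≤ ‖z (n + 1)‖ := by
    intro n
    have : ‖z n‖ ^ 2 = ‖spow 2 (z n)‖ := (norm_spow2 _).symm
    rw [this, hstep n]
    have h := norm_add_le (spow 2 (z n) + c) (-c)
    simp only [add_neg_cancel_right, norm_neg] at h
    linarith
  have hz1 : ‖z 1‖ = ‖c‖ := by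
    simp [hz, hf, spow2_zero]
  constructor
  · intro hb
    obtain ⟨R, hR⟩ := isBounded_iff_forall_norm_le.1 hb
    have hRz : ∀ n, ‖z n‖ ≤ R := fun n => hR _ ⟨n, rfl⟩
    by_contra hcon
    push_neg at hcon
    obtain ⟨N, hN⟩ := hcon
    -- choose a starting index M with ‖z M‖ > 2 and ‖c‖ ≤ ‖z M‖
    obtain ⟨M, hM2, hMc⟩ : ∃ M, 2 < ‖z M‖ ∧ ‖c‖ ≤ ‖z M‖ := by
      by_cases h : ‖c‖ ≤ 2
      · exact ⟨N, hN, le_trans h hN.le⟩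
      · exact ⟨1, by rw [hz1]; linarith, by rw [hz1]⟩
    set ε := ‖z M‖ - 2 with hε
    have hεpos : 0 < ε := by simp only [hε]; linarith
    have key : ∀ k, 2 + 3 ^ k * ε ≤ ‖z (M + k)‖ := by
      intro k
      induction k with
      | zero => simp [hε]
      | succ k ih =>
        have h3 : (1 : ℝ) ≤ 3 ^ k := one_le_pow₀ (by norm_num)
        have hcb : ‖c‖ ≤ 2 + ε := by simp only [hε]; linarith
        have h1 := hlow (M + k)
        have hnn : (0:ℝ) ≤ 2 + 3 ^ k * ε := by positivity
        have hsq : (2 + 3 ^ k * ε) ^ 2 ≤ ‖z (M + k)‖ ^ 2 := by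
          exact pow_le_pow_left₀ hnn ih 2
        have : 2 + 3 ^ (k + 1) * ε ≤ (2 + 3 ^ k * ε) ^ 2 - ‖c‖ := by
          rw [pow_succ]
          nlinarith [hεpos, h3, hcb, mul_le_mul_of_nonneg_right h3 hεpos.le]
        calc 2 + 3 ^ (k + 1) * ε ≤ (2 + 3 ^ k * ε) ^ 2 - ‖c‖ := this
          _ ≤ ‖z (M + k)‖ ^ 2 - ‖c‖ := by linarith
          _ ≤ ‖z (M + k + 1)‖ := h1
    obtain ⟨k, hk⟩ := pow_unbounded_of_one_lt ((R - 2) / ε) (by norm_num : (1:ℝ) < 3)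
    have : R - 2 < 3 ^ k * ε := by
      rw [div_lt_iff₀ hεpos] at hk; linarith
    have := key k
    have := hRz (M + k)
    linarith
  · intro h
    refine isBounded_iff_forall_norm_le.2 ⟨2, ?_⟩
    rintro x ⟨n, rfl⟩
    exact h n
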